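/- Fix distinct alternatives a, z ∈ A, an integer k, and n ≥ 1. The number of voting situations with n agents on A for which Sc_T(z) − Sc_T(a) = k is at most C(n + m! − 2, n); in particular, since there are C(n + m! − 1, n) voting situations with n agents in total, the proportion of voting situations for which Sc_T(z) − Sc_T(a) = k is at most (m! − 1)/(n + m! − 1). -/

import Mathlib

open Finset Filter

/-- A vote (strict linear order) on `m` alternatives, encoded by its position map:
`v x` is the position of alternative `x`, position `0` being the top.
`v` ranks `x` above `y` iff `v x < v y`. -/
abbrev Vote (m : ℕ) := Equiv.Perm (Fin m)

/-- A profile is a list of `n` votes, one per agent. -/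
abbrev Profile (m n : ℕ) := Fin n → Vote m

/-- `n_{xy}[P]`: the number of votes in `P` ranking `x` above `y`. -/
def nAbove {m n : ℕ} (P : Profile m n) (x y : Fin m) : ℕ :=
  (Finset.univ.filter (fun i => P i x < P i y)).card

/-- `adv[P](x,y) = max (0, n_{xy} - n_{yx})` (truncated subtraction on `ℕ`). -/
def adv {m n : ℕ} (P : Profile m n) (x y : Fin m) : ℕ :=
  nAbove P x y - nAbove P y x

/-- The Tideman score `Sc_T[P](a) = Σ_{b ≠ a} adv[P](b,a)`. -/
def ScT {m n : ℕ} (P : Profile m n) (a : Fin m) : ℕ :=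
  ∑ b ∈ Finset.univ.filter (fun b => b ≠ a), adv P b a

/-- The Dodgson Quick score `Sc_Q[P](a) = Σ_{b ≠ a} ⌈adv[P](b,a)/2⌉`. -/
def ScQ {m n : ℕ} (P : Profile m n) (a : Fin m) : ℕ :=
  ∑ b ∈ Finset.univ.filter (fun b => b ≠ a), (adv P b a + 1) / 2

/-- `a` is a Condorcet-tie winner of `P` iff `adv[P](b,a) = 0` for all `b ≠ a`. -/
def CondorcetTieWinner {m n : ℕ} (P : Profile m n) (a : Fin m) : Prop :=
  ∀ b, b ≠ a → adv P b a = 0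

/-- `a` is a Condorcet winner of `P` iff `adv[P](a,b) > 0` for all `b ≠ a`. -/
def CondorcetWinner {m n : ℕ} (P : Profile m n) (a : Fin m) : Prop :=
  ∀ b, b ≠ a → 0 < adv P a b

/-- `w` is obtained from the vote `v` by one swap of neighbouring alternatives
(the alternatives at consecutive positions `p` and `p+1` are exchanged). -/
def AdjSwapVote {m : ℕ} (v w : Vote m) : Prop :=
  ∃ p q : Fin m, (q : ℕ) = (p : ℕ) + 1 ∧ w = v.trans (Equiv.swap p q)

/-- `Q` is obtained from the profile `P` by one adjacent swap in one vote. -/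
def AdjSwap {m n : ℕ} (P Q : Profile m n) : Prop :=
  ∃ i : Fin n, AdjSwapVote (P i) (Q i) ∧ ∀ j, j ≠ i → Q j = P j

/-- `Reach r k P Q`: `Q` can be obtained from `P` by exactly `k` steps of `r`. -/
def Reach {α : Type*} (r : α → α → Prop) : ℕ → α → α → Prop
  | 0, P, Q => P = Q
  | (k+1), P, Q => ∃ R, r P R ∧ Reach r k R Q

/-- The Dodgson score `Sc_D[P](a)`: the minimum number of adjacent swaps needed to
transform `P` into a profile in which `a` is a Condorcet-tie winner. -/
noncomputable def ScD {m n : ℕ} (P : Profile m n) (a : Fin m) : ℕ :=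
  sInf {k | ∃ Q, Reach AdjSwap k P Q ∧ CondorcetTieWinner Q a}

/-- Variant of the Dodgson score requiring `a` to become a Condorcet winner. -/
noncomputable def ScD' {m n : ℕ} (P : Profile m n) (a : Fin m) : ℕ :=
  sInf {k | ∃ Q, Reach AdjSwap k P Q ∧ CondorcetWinner Q a}

/- Voting situations: multisets of votes.  Scores depend only on the voting
situation of a profile, so we define them directly on multisets. -/

/-- Number of votes in the voting situation `S` ranking `x` above `y`. -/
def snAbove {m : ℕ} (S : Multiset (Vote m)) (x y : Fin m) : ℕ :=
  (S.filter (fun v => v x < v y)).card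

def sadv {m : ℕ} (S : Multiset (Vote m)) (x y : Fin m) : ℕ :=
  snAbove S x y - snAbove S y x

/-- Tideman score of a voting situation. -/
def sScT {m : ℕ} (S : Multiset (Vote m)) (a : Fin m) : ℕ :=
  ∑ b ∈ Finset.univ.filter (fun b => b ≠ a), sadv S b a

/-- Dodgson Quick score of a voting situation. -/
def sScQ {m : ℕ} (S : Multiset (Vote m)) (a : Fin m) : ℕ :=
  ∑ b ∈ Finset.univ.filter (fun b => b ≠ a), (sadv S b a + 1) / 2

def sCondorcetTieWinner {m : ℕ} (S : Multiset (Vote m)) (a : Fin m) : Prop :=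
  ∀ b, b ≠ a → sadv S b a = 0

/-- One adjacent swap applied to one vote of a voting situation. -/
def sAdjSwap {m : ℕ} (S T : Multiset (Vote m)) : Prop :=
  ∃ v ∈ S, ∃ w, AdjSwapVote v w ∧ T = w ::ₘ S.erase v

/-- Dodgson score of a voting situation. -/
noncomputable def sScD {m : ℕ} (S : Multiset (Vote m)) (a : Fin m) : ℕ :=
  sInf {k | ∃ T, Reach sAdjSwap k S T ∧ sCondorcetTieWinner T a}

/-- `a` is a Tideman winner (minimal Tideman score). -/
def sTWinner {m : ℕ} (S : Multiset (Vote m)) (a : Fin m) : Prop :=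
  ∀ b, sScT S a ≤ sScT S b

/-- `a` is a DQ winner (minimal DQ score). -/
def sQWinner {m : ℕ} (S : Multiset (Vote m)) (a : Fin m) : Prop :=
  ∀ b, sScQ S a ≤ sScQ S b

/-- `a` is a Dodgson winner (minimal Dodgson score). -/
def sDWinner {m : ℕ} (S : Multiset (Vote m)) (a : Fin m) : Prop :=
  ∀ b, sScD S a ≤ sScD S b

/-- For fixed distinct alternatives `a, z`, a fixed integer `k` and `n ≥ 1`, the
number of voting situations with `n` agents for which `Sc_T(z) − Sc_T(a) = k`
is at most `C(n + m! − 2, n)`; in particular, since there are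
`C(n + m! − 1, n)` voting situations in total, the proportion of voting
situations for which `Sc_T(z) − Sc_T(a) = k` is at most
`(m! − 1)/(n + m! − 1)`. -/
-- split a countP at a designated element satisfying the predicate
lemma countP_split {α : Type*} [DecidableEq α] (p : α → Prop) [DecidablePred p]
    (v : α) (hv : p v) (S : Multiset α) :
    S.countP p = S.count v + S.countP (fun x => p x ∧ x ≠ v) := by
  induction S using Multiset.induction with
  | empty => simp
  | cons u S ih =>
    simp only [ne_eq] at ih ⊢
    simp only [Multiset.countP_cons, Multiset.count_cons, ih]
    by_cases h : u = v
    · have h2 : p u := h ▸ hv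
      simp [h, h2, hv] <;> omega
    · have h3 : ¬ v = u := fun hh => h hh.symm
      by_cases h2 : p u <;> simp [h, h2, h3] <;> omega

lemma count_map_if {α : Type*} [DecidableEq α] (v w : α) (hvw : v ≠ w)
    (S : Multiset α) :
    (S.map (fun u => if u = w then v else u)).count v = S.count v + S.count w := by
  induction S using Multiset.induction with
  | empty => simp
  | cons u S ih =>
    simp only [Multiset.map_cons, Multiset.count_cons, ih]
    by_cases h : u = w
    · simp [h, hvw] <;> omega
    · have h4 : ¬ (w = u) := fun hh => h hh.symm
      by_cases h2 : v = u <;> simp [h, h2, h4] <;> omega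

lemma count_map_if' {α : Type*} [DecidableEq α] (v w u : α) (hu1 : u ≠ v) (hu2 : u ≠ w)
    (S : Multiset α) :
    (S.map (fun x => if x = w then v else x)).count u = S.count u := by
  induction S using Multiset.induction with
  | empty => simp
  | cons x S ih =>
    simp only [Multiset.map_cons, Multiset.count_cons, ih]
    by_cases h : x = w
    · simp [h, hu1, hu2]
    · simp [h]

theorem stmt_3 {m : ℕ} (hm : 2 ≤ m) (a z : Fin m) (haz : a ≠ z) (k : ℤ)
    (n : ℕ) (hn : 1 ≤ n) :
    Set.ncard {S : Sym (Vote m) n |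
        (sScT (S : Multiset (Vote m)) z : ℤ) - sScT (S : Multiset (Vote m)) a = k} ≤
      Nat.choose (n + Nat.factorial m - 2) n ∧
    (Set.ncard {S : Sym (Vote m) n |
        (sScT (S : Multiset (Vote m)) z : ℤ) - sScT (S : Multiset (Vote m)) a = k} : ℝ) /
        Nat.choose (n + Nat.factorial m - 1) n ≤
      ((Nat.factorial m : ℝ) - 1) / ((n : ℝ) + Nat.factorial m - 1) := by
  have hmf : 2 ≤ Nat.factorial m := le_trans hm (Nat.self_le_factorial m)
  set o : Fin m := ⟨0, by omega⟩ with ho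
  set i1 : Fin m := ⟨1, by omega⟩ with hi1
  have hvalo : (o : ℕ) = 0 := rfl
  have hvali : (i1 : ℕ) = 1 := rfl
  have hoi : o ≠ i1 := by simp [ho, hi1, Fin.ext_iff]
  obtain ⟨v0, hv0a, hv0z⟩ : ∃ v0 : Vote m, v0 a = o ∧ v0 z = i1 := by
    have h1 : (Equiv.swap a o) z ≠ o := by
      have h2 : (Equiv.swap a o) z ≠ (Equiv.swap a o) a :=
        (Equiv.injective _).ne (Ne.symm haz)
      simpa [Equiv.swap_apply_left] using h2
    refine ⟨(Equiv.swap a o).trans (Equiv.swap ((Equiv.swap a o) z) i1), ?_, ?_⟩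
    · simp only [Equiv.trans_apply, Equiv.swap_apply_left]
      exact Equiv.swap_apply_of_ne_of_ne (Ne.symm h1) hoi
    · simp only [Equiv.trans_apply, Equiv.swap_apply_left]
  set w0 : Vote m := v0.trans (Equiv.swap o i1) with hw0def
  have hw0a : w0 a = i1 := by simp [hw0def, hv0a, Equiv.swap_apply_left]
  have hw0z : w0 z = o := by simp [hw0def, hv0z, Equiv.swap_apply_right]
  have hv0big : ∀ b, b ≠ a → b ≠ z → 2 ≤ (v0 b : ℕ) := by
    intro b hba hbz
    have h1 : v0 b ≠ o := by rw [← hv0a]; exact (Equiv.injective _).ne hba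
    have h2 : v0 b ≠ i1 := by rw [← hv0z]; exact (Equiv.injective _).ne hbz
    rw [Ne, Fin.ext_iff, hvalo] at h1
    rw [Ne, Fin.ext_iff, hvali] at h2
    omega
  have hw0b : ∀ b, b ≠ a → b ≠ z → w0 b = v0 b := by
    intro b hba hbz
    have h1 : v0 b ≠ o := by rw [← hv0a]; exact (Equiv.injective _).ne hba
    have h2 : v0 b ≠ i1 := by rw [← hv0z]; exact (Equiv.injective _).ne hbz
    simp [hw0def, Equiv.swap_apply_of_ne_of_ne h1 h2]
  have hw0v0 : w0 ≠ v0 := by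
    intro h
    have := congrArg (fun e : Vote m => e a) h
    simp only [hw0a, hv0a] at this
    exact hoi this.symm
  -- the relabelling map
  set g : Vote m → Vote m := fun u => if u = w0 then v0 else u with hgdef
  -- countP invariance along g
  have inv : ∀ (p : Vote m → Prop), ∀ (_ : DecidablePred p), (p v0 ↔ p w0) →
      ∀ S : Multiset (Vote m), (S.map g).countP p = S.countP p := by
    intro p hp hiff S
    rw [Multiset.countP_map, ← Multiset.countP_eq_card_filter]
    apply Multiset.countP_congr rfl
    intro x _
    by_cases h : x = w0
    · subst h; simp [hgdef]; tauto
    · simp [hgdef, h]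
  have hsnA : ∀ (S : Multiset (Vote m)) x y,
      snAbove S x y = S.countP (fun v => v x < v y) :=
    fun S x y => (Multiset.countP_eq_card_filter _ _).symm
  -- main injectivity on multisets
  have main : ∀ S S' : Multiset (Vote m), S.map g = S'.map g →
      (sScT S z : ℤ) - sScT S a = (sScT S' z : ℤ) - sScT S' a → S = S' := by
    intro S S' hmap hkey
    have hcnt : ∀ (p : Vote m → Prop), ∀ (_ : DecidablePred p), (p v0 ↔ p w0) →
        S.countP p = S'.countP p := by
      intro p hp hiff
      rw [← inv p hp hiff S, ← inv p hp hiff S', hmap]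
    have hsn : ∀ x y : Fin m, ((v0 x < v0 y) ↔ (w0 x < w0 y)) →
        snAbove S x y = snAbove S' x y := by
      intro x y hxy
      rw [hsnA, hsnA]
      exact hcnt _ _ hxy
    -- comparisons not involving the pair {a,z} are invariant
    have hiff1 : ∀ b, b ≠ a → b ≠ z → ((v0 b < v0 z) ↔ (w0 b < w0 z)) := by
      intro b hba hbz
      have := hv0big b hba hbz
      rw [Fin.lt_def, Fin.lt_def, hw0b b hba hbz, hv0z, hw0z, hvali, hvalo]
      omega
    have hiff2 : ∀ b, b ≠ a → b ≠ z → ((v0 z < v0 b) ↔ (w0 z < w0 b)) := by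
      intro b hba hbz
      have := hv0big b hba hbz
      rw [Fin.lt_def, Fin.lt_def, hw0b b hba hbz, hv0z, hw0z, hvali, hvalo]
      omega
    have hiff3 : ∀ b, b ≠ a → b ≠ z → ((v0 b < v0 a) ↔ (w0 b < w0 a)) := by
      intro b hba hbz
      have := hv0big b hba hbz
      rw [Fin.lt_def, Fin.lt_def, hw0b b hba hbz, hv0a, hw0a, hvali, hvalo]
      omega
    have hiff4 : ∀ b, b ≠ a → b ≠ z → ((v0 a < v0 b) ↔ (w0 a < w0 b)) := by
      intro b hba hbz
      have := hv0big b hba hbz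
      rw [Fin.lt_def, Fin.lt_def, hw0b b hba hbz, hv0a, hw0a, hvali, hvalo]
      omega
    -- decomposition of snAbove S a z and snAbove S z a
    have hvaz : v0 a < v0 z := by rw [Fin.lt_def, hv0a, hv0z, hvali, hvalo]; omega
    have hwza : w0 z < w0 a := by rw [Fin.lt_def, hw0a, hw0z, hvali, hvalo]; omega
    have hnvza : ¬ (v0 z < v0 a) := by rw [Fin.lt_def, hv0a, hv0z, hvali, hvalo]; omega
    have hnwaz : ¬ (w0 a < w0 z) := by rw [Fin.lt_def, hw0a, hw0z, hvali, hvalo]; omega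
    have q1inv : S.countP (fun x => (x a < x z) ∧ x ≠ v0)
        = S'.countP (fun x => (x a < x z) ∧ x ≠ v0) := by
      apply hcnt _ inferInstance
      simp [hnwaz]
    have q2inv : S.countP (fun x => (x z < x a) ∧ x ≠ w0)
        = S'.countP (fun x => (x z < x a) ∧ x ≠ w0) := by
      apply hcnt _ inferInstance
      simp [hnvza, Ne.symm hw0v0]
    have eaz : snAbove S a z = S.count v0 + S.countP (fun x => (x a < x z) ∧ x ≠ v0) := by
      rw [hsnA]; exact countP_split _ v0 hvaz S
    have eaz' : snAbove S' a z = S'.count v0 + S'.countP (fun x => (x a < x z) ∧ x ≠ v0) := by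
      rw [hsnA]; exact countP_split _ v0 hvaz S'
    have eza : snAbove S z a = S.count w0 + S.countP (fun x => (x z < x a) ∧ x ≠ w0) := by
      rw [hsnA]; exact countP_split _ w0 hwza S
    have eza' : snAbove S' z a = S'.count w0 + S'.countP (fun x => (x z < x a) ∧ x ≠ w0) := by
      rw [hsnA]; exact countP_split _ w0 hwza S'
    -- conservation of count v0 + count w0
    have hcons : S.count v0 + S.count w0 = S'.count v0 + S'.count w0 := by
      have h1 := count_map_if v0 w0 (Ne.symm hw0v0) S
      have h2 := count_map_if v0 w0 (Ne.symm hw0v0) S'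
      rw [hgdef] at hmap
      rw [← h1, ← h2, hmap]
    -- decompose the Tideman scores
    have hmemA : a ∈ Finset.univ.filter (fun b => b ≠ z) := by simp [haz]
    have hmemZ : z ∈ Finset.univ.filter (fun b => b ≠ a) := by simp [Ne.symm haz]
    have escz : ∀ T : Multiset (Vote m), sScT T z
        = sadv T a z + ∑ b ∈ (Finset.univ.filter (fun b => b ≠ z)).erase a, sadv T b z := by
      intro T
      rw [sScT, ← Finset.add_sum_erase _ _ hmemA]
    have esca : ∀ T : Multiset (Vote m), sScT T a
        = sadv T z a + ∑ b ∈ (Finset.univ.filter (fun b => b ≠ a)).erase z, sadv T b a := by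
      intro T
      rw [sScT, ← Finset.add_sum_erase _ _ hmemZ]
    have hsum1 : ∑ b ∈ (Finset.univ.filter (fun b => b ≠ z)).erase a, sadv S b z
        = ∑ b ∈ (Finset.univ.filter (fun b => b ≠ z)).erase a, sadv S' b z := by
      apply Finset.sum_congr rfl
      intro b hb
      have hba : b ≠ a := (Finset.mem_erase.1 hb).1
      have hbz : b ≠ z := by
        have := (Finset.mem_erase.1 hb).2
        simpa using this
      rw [sadv, sadv, hsn b z (hiff1 b hba hbz), hsn z b (hiff2 b hba hbz)]
    have hsum2 : ∑ b ∈ (Finset.univ.filter (fun b => b ≠ a)).erase z, sadv S b a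
        = ∑ b ∈ (Finset.univ.filter (fun b => b ≠ a)).erase z, sadv S' b a := by
      apply Finset.sum_congr rfl
      intro b hb
      have hbz : b ≠ z := (Finset.mem_erase.1 hb).1
      have hba : b ≠ a := by
        have := (Finset.mem_erase.1 hb).2
        simpa using this
      rw [sadv, sadv, hsn b a (hiff3 b hba hbz), hsn a b (hiff4 b hba hbz)]
    -- now conclude equality of counts at v0 and w0
    have eS1 := escz S
    have eS2 := esca S
    have eS1' := escz S'
    have eS2' := esca S'
    rw [hsum1] at eS1
    rw [hsum2] at eS2
    have hadvS : sadv S a z = snAbove S a z - snAbove S z a := rfl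
    have hadvS2 : sadv S z a = snAbove S z a - snAbove S a z := rfl
    have hadvS' : sadv S' a z = snAbove S' a z - snAbove S' z a := rfl
    have hadvS2' : sadv S' z a = snAbove S' z a - snAbove S' a z := rfl
    have hcv : S.count v0 = S'.count v0 := by omega
    have hcww : S.count w0 = S'.count w0 := by omega
    ext u
    by_cases h1 : u = v0
    · subst h1; exact hcv
    by_cases h2 : u = w0
    · subst h2; exact hcww
    have e1 := count_map_if' v0 w0 u h1 h2 S
    have e2 := count_map_if' v0 w0 u h1 h2 S'
    rw [hgdef] at hmap
    rw [← e1, ← e2, hmap]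
  -- the injection into symmetric powers over votes ≠ w0
  have hv0ne : v0 ≠ w0 := Ne.symm hw0v0
  set β := {u : Vote m // u ≠ w0} with hβ
  have hcardβ : Fintype.card β = Nat.factorial m - 1 := by
    have h1 : Fintype.card (Vote m) = Nat.factorial m := by
      rw [Fintype.card_perm, Fintype.card_fin]
    have h2 : Fintype.card {u : Vote m // u = w0} = 1 := Fintype.card_subtype_eq w0
    have h3 := Fintype.card_subtype_compl (fun u : Vote m => u = w0)
    rw [h1, h2] at h3
    exact h3
  set g' : Vote m → β := fun u => if h : u = w0 then ⟨v0, hv0ne⟩ else ⟨u, h⟩ with hg'def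
  have hgg' : ∀ u, (g' u : Vote m) = g u := by
    intro u
    by_cases h : u = w0 <;> simp [hg'def, hgdef, h]
  set A := {S : Sym (Vote m) n |
      (sScT (S : Multiset (Vote m)) z : ℤ) - sScT (S : Multiset (Vote m)) a = k} with hA
  have hinj : Set.InjOn (Sym.map g') A := by
    intro S hS S' hS' hFF
    have hcoe : Multiset.map g' (S : Multiset (Vote m)) = Multiset.map g' (S' : Multiset (Vote m)) := by
      have := congrArg (fun T : Sym β n => (T : Multiset β)) hFF
      simpa [Sym.coe_map] using this
    have hmap : Multiset.map g (S : Multiset (Vote m)) = Multiset.map g (S' : Multiset (Vote m)) := by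
      have := congrArg (Multiset.map (Subtype.val : β → Vote m)) hcoe
      rw [Multiset.map_map, Multiset.map_map] at this
      simpa [Function.comp, hgg'] using this
    have := main _ _ hmap (by rw [hS.out, hS'.out])
    exact Sym.coe_injective this
  have hb1 : Set.ncard A ≤ Nat.choose (n + Nat.factorial m - 2) n := by
    have hle : Set.ncard A ≤ (Set.univ : Set (Sym β n)).ncard :=
      Set.ncard_le_ncard_of_injOn (Sym.map g') (fun x _ => Set.mem_univ _) hinj
        Set.finite_univ
    rw [Set.ncard_univ, Nat.card_eq_fintype_card, Sym.card_sym_eq_choose, hcardβ] at hle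
    have : Nat.factorial m - 1 + n - 1 = n + Nat.factorial m - 2 := by omega
    rwa [this] at hle
  refine ⟨hb1, ?_⟩
  -- second part : arithmetic
  set N := n + Nat.factorial m - 1 with hN
  have hnN : n + 1 ≤ N := by omega
  have hid : N * Nat.choose (N - 1) n = (Nat.factorial m - 1) * Nat.choose N n := by
    have h3 := Nat.add_one_mul_choose_eq (N - 1) (N - 1 - n)
    have e1 : N - 1 + 1 = N := by omega
    have e2 : N - 1 - n + 1 = N - n := by omega
    rw [e1, e2] at h3
    have h1 : Nat.choose (N - 1) (N - 1 - n) = Nat.choose (N - 1) n :=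
      Nat.choose_symm (by omega)
    have h2 : Nat.choose N (N - n) = Nat.choose N n := Nat.choose_symm (by omega)
    rw [h1, h2] at h3
    have h4 : N - n = Nat.factorial m - 1 := by omega
    rw [h3, h4, Nat.mul_comm]
  have hb1' : Set.ncard A ≤ Nat.choose (N - 1) n := by
    have : n + Nat.factorial m - 2 = N - 1 := by omega
    rwa [this] at hb1
  have hCpos : 0 < Nat.choose N n := Nat.choose_pos (by omega)
  have hNpos : (0:ℝ) < (n : ℝ) + Nat.factorial m - 1 := by
    have : (1:ℝ) ≤ n := by exact_mod_cast hn
    have : (2:ℝ) ≤ Nat.factorial m := by exact_mod_cast hmf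
    nlinarith [ (by exact_mod_cast hn : (1:ℝ) ≤ n) ]
  have hCpos' : (0:ℝ) < (Nat.choose N n : ℝ) := by exact_mod_cast hCpos
  rw [div_le_div_iff₀ hCpos' hNpos]
  have hcastN : ((n : ℝ) + Nat.factorial m - 1) = (N : ℝ) := by
    rw [hN]
    push_cast [Nat.cast_sub (by omega : 1 ≤ n + Nat.factorial m)]
    ring
  have hcastF : ((Nat.factorial m : ℝ) - 1) = ((Nat.factorial m - 1 : ℕ) : ℝ) := by
    push_cast [Nat.cast_sub (by omega : 1 ≤ Nat.factorial m)]
    ring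
  rw [hcastN, hcastF]
  have key : Set.ncard A * N ≤ (Nat.factorial m - 1) * Nat.choose N n := by
    calc Set.ncard A * N ≤ Nat.choose (N - 1) n * N := by
          exact Nat.mul_le_mul_right _ hb1'
      _ = (Nat.factorial m - 1) * Nat.choose N n := by rw [Nat.mul_comm]; exact hid
  exact_mod_cast key
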